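/- With X as above (Θ uniform on [0, π/2], X = |d₀e^{iΘ} − u|), if |u − d₀| < 1 < √(d₀²+u²) and u ≤ d₀ + 1 (resp. u ≥ d₀ − 1), then P(X ≤ 1) = 1 − (2/π) arctan( √( (d₀²(1+α²) − 1)² / ( (2α d₀²)² − (d₀²(1+α²) − 1)² ) ) ), where α = u/d₀. -/

import Mathlib

open MeasureTheory Real

/-- Near-field probability: with Θ uniform on [0, π/2], X = |d₀e^{iΘ} − u|, and
|u − d₀| < 1 < √(d₀² + u²), one has
P(X ≤ 1) = 1 − (2/π) arctan √((d₀²(1+α²)−1)² / ((2αd₀²)² − (d₀²(1+α²)−1)²)), α = u/d₀. -/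
theorem nearfield_probability (Ω : Type*) [MeasurableSpace Ω] (μ : Measure Ω)
    [IsProbabilityMeasure μ] (Θ : Ω → ℝ) (hΘ : Measurable Θ)
    (hunif : Measure.map Θ μ
      = (ENNReal.ofReal (2/π)) • (volume.restrict (Set.Icc (0:ℝ) (π/2))))
    (d₀ u : ℝ) (hd : 0 < d₀) (hu : 0 < u)
    (h1 : |u - d₀| < 1) (h2 : 1 < Real.sqrt (d₀^2 + u^2)) :
    (μ {ω | ‖(d₀:ℂ) * Complex.exp ((Θ ω : ℂ) * Complex.I) - (u:ℂ)‖ ≤ 1}).toReal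
      = 1 - (2/π) * Real.arctan (Real.sqrt
          ((d₀^2 * (1 + (u/d₀)^2) - 1)^2
            / ((2 * (u/d₀) * d₀^2)^2 - (d₀^2 * (1 + (u/d₀)^2) - 1)^2))) := by
  have hπ : (0:ℝ) < π := Real.pi_pos
  set A : ℝ := d₀^2 + u^2 - 1 with hA
  set B : ℝ := 2 * d₀ * u with hB
  have hA0 : 0 < A := by
    nlinarith [Real.sq_sqrt (by positivity : (0:ℝ) ≤ d₀^2 + u^2), Real.sqrt_nonneg (d₀^2+u^2)]
  have hAB : A < B := by
    have := sq_abs (u - d₀)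
    nlinarith [abs_nonneg (u - d₀)]
  have hB0 : 0 < B := lt_trans hA0 hAB
  set c : ℝ := A / B with hc
  have hc0 : 0 < c := div_pos hA0 hB0
  have hc1 : c < 1 := (div_lt_one hB0).2 hAB
  -- abs computation
  have habs : ∀ θ : ℝ, (‖(d₀:ℂ) * Complex.exp ((θ:ℂ) * Complex.I) - (u:ℂ)‖)^2
      = d₀^2 + u^2 - 2*d₀*u*Real.cos θ := by
    intro θ
    rw [Complex.sq_norm, Complex.normSq_apply]
    simp [Complex.exp_mul_I, Complex.mul_re, Complex.mul_im, Complex.cos_ofReal_re,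
      Complex.sin_ofReal_re]
    nlinarith [Real.sin_sq_add_cos_sq θ]
  -- event condition
  have hcond : ∀ θ : ℝ,
      (‖(d₀:ℂ) * Complex.exp ((θ:ℂ) * Complex.I) - (u:ℂ)‖ ≤ 1 ↔ c ≤ Real.cos θ) := by
    intro θ
    rw [← pow_le_one_iff_of_nonneg (norm_nonneg _) (two_ne_zero), habs θ, hc,
      div_le_iff₀ hB0]
    constructor <;> intro h <;> nlinarith
  have hSmeas : MeasurableSet {θ : ℝ | c ≤ Real.cos θ} :=
    (isClosed_le continuous_const Real.continuous_cos).measurableSet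
  have hev : {ω | ‖(d₀:ℂ) * Complex.exp ((Θ ω : ℂ) * Complex.I) - (u:ℂ)‖ ≤ 1}
      = Θ ⁻¹' {θ : ℝ | c ≤ Real.cos θ} := by
    ext ω; exact hcond (Θ ω)
  have hmap : μ {ω | ‖(d₀:ℂ) * Complex.exp ((Θ ω : ℂ) * Complex.I) - (u:ℂ)‖ ≤ 1}
      = (Measure.map Θ μ) {θ : ℝ | c ≤ Real.cos θ} := by
    rw [hev, Measure.map_apply hΘ hSmeas]
  -- arccos facts
  have hacm : Real.arccos c ∈ Set.Icc 0 (π/2) :=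
    ⟨Real.arccos_nonneg c, Real.arccos_le_pi_div_two.2 hc0.le⟩
  have hset : {θ : ℝ | c ≤ Real.cos θ} ∩ Set.Icc 0 (π/2) = Set.Icc 0 (Real.arccos c) := by
    ext θ
    simp only [Set.mem_inter_iff, Set.mem_setOf_eq, Set.mem_Icc]
    constructor
    · rintro ⟨hcle, h0, hle⟩
      refine ⟨h0, ?_⟩
      have := Real.strictAntiOn_cos.le_iff_ge
        (Set.mem_Icc.2 ⟨hacm.1, hacm.2.trans (by linarith)⟩)
        (Set.mem_Icc.2 ⟨h0, by linarith⟩)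
      rw [Real.cos_arccos (by linarith) hc1.le] at this
      exact this.1 hcle
    · rintro ⟨h0, hle⟩
      have hθπ : θ ≤ π/2 := hle.trans hacm.2
      refine ⟨?_, h0, hθπ⟩
      have := Real.strictAntiOn_cos.le_iff_ge
        (Set.mem_Icc.2 ⟨hacm.1, hacm.2.trans (by linarith)⟩)
        (Set.mem_Icc.2 ⟨h0, by linarith⟩)
      rw [Real.cos_arccos (by linarith) hc1.le] at this
      exact this.2 hle
  have hmeasval : (μ {ω | ‖(d₀:ℂ) * Complex.exp ((Θ ω : ℂ) * Complex.I) - (u:ℂ)‖ ≤ 1}).toReal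
      = (2/π) * Real.arccos c := by
    rw [hmap, hunif, Measure.smul_apply, Measure.restrict_apply hSmeas, hset,
      Real.volume_Icc, sub_zero, smul_eq_mul, ← ENNReal.ofReal_mul (by positivity)]
    rw [ENNReal.toReal_ofReal (mul_nonneg (by positivity) (Real.arccos_nonneg c))]
  rw [hmeasval]
  -- algebra part
  have hd0 : d₀ ≠ 0 := hd.ne'
  have e1 : d₀^2 * (1 + (u/d₀)^2) - 1 = A := by rw [hA]; field_simp
  have e2 : 2 * (u/d₀) * d₀^2 = B := by field_simp; ring
  rw [e1, e2]
  have hBA : 0 < B^2 - A^2 := by nlinarith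
  have hsq : Real.sqrt (A^2 / (B^2 - A^2)) = c / Real.sqrt (1 - c^2) := by
    have h1c : 1 - c^2 = (B^2 - A^2) / B^2 := by rw [hc]; field_simp
    rw [h1c, Real.sqrt_div hBA.le, Real.sqrt_div (by positivity), Real.sqrt_sq hA0.le,
      Real.sqrt_sq hB0.le, hc]
    have hs : Real.sqrt (B^2 - A^2) ≠ 0 := by positivity
    field_simp
  rw [hsq, ← Real.arcsin_eq_arctan ⟨by linarith, hc1⟩,
    Real.arccos_eq_pi_div_two_sub_arcsin]
  field_simp
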